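/- If p ∈ R is homogeneous of total degree m, every monomial in the support of p has weight (md−1, 1, 0, …, 0) ∈ ℕ^{n+1}, and E_{12}(p) = 0, then p = 0. (This encodes that the irreducible SL_{n+1}(ℂ)-representation of highest weight (md−2)λ_1 + λ_2 does not occur in S^m V_d, i.e. Hom(V_{(md−2)λ_1+λ_2}, S^m V_d)^{SL_{n+1}(ℂ)} = 0.) -/

import Mathlib

open MvPolynomial Finset

/-- Let `R = ℂ[y_k : k ∈ Λ]` with `Λ = {k ∈ ℕ^{n+1} : k₁+⋯+k_{n+1} = d}`, and let
`E₁₂` be the derivation of `R` with `E₁₂(y_k) = k₂·y_{k+e₁-e₂}` if `k₂ ≥ 1` and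
`E₁₂(y_k) = 0` if `k₂ = 0`. If `p` is homogeneous of total degree `m`, every monomial
in its support has weight `(md-1, 1, 0, …, 0)`, and `E₁₂(p) = 0`, then `p = 0`:
the representation of highest weight `(md-2)λ₁ + λ₂` does not occur in `SᵐV_d`. -/
theorem weight_killed_by_E12_is_zero (n d m : ℕ) (hn : 2 ≤ n) (hd : 2 ≤ d) (hm : 2 ≤ m)
    (E₁₂ : Derivation ℂ (MvPolynomial {k : Fin (n + 1) → ℕ // ∑ t, k t = d} ℂ)
      (MvPolynomial {k : Fin (n + 1) → ℕ // ∑ t, k t = d} ℂ))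
    (hE₀ : ∀ k : {k : Fin (n + 1) → ℕ // ∑ t, k t = d},
      k.1 1 = 0 → E₁₂ (X k) = 0)
    (hE₁ : ∀ k k' : {k : Fin (n + 1) → ℕ // ∑ t, k t = d},
      1 ≤ k.1 1 →
      k'.1 = (fun t : Fin (n + 1) =>
        if t = 0 then k.1 0 + 1 else if t = 1 then k.1 1 - 1 else k.1 t) →
      E₁₂ (X k) = (k.1 1 : ℂ) • X k')
    (p : MvPolynomial {k : Fin (n + 1) → ℕ // ∑ t, k t = d} ℂ)
    (hp : p.IsHomogeneous m)
    (hw : ∀ μ ∈ p.support,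
      (fun t : Fin (n + 1) => μ.sum fun k e => e * k.1 t)
        = (fun t : Fin (n + 1) =>
            if t = 0 then m * d - 1 else if t = 1 then 1 else 0))
    (hEp : E₁₂ p = 0) :
    p = 0 := by
  classical
  have hn0 : n ≠ 0 := by omega
  have h01 : (0 : Fin (n + 1)) ≠ 1 := by
    intro h
    have := congrArg Fin.val h
    simp [Fin.val_one'] at this
    omega
  -- the two relevant variables
  have ha_sum : ∑ t : Fin (n + 1), (if t = 0 then d else 0) = d := by simp
  set a : {k : Fin (n + 1) → ℕ // ∑ t, k t = d} :=
    ⟨fun t => if t = 0 then d else 0, ha_sum⟩ with ha_def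
  have hb_sum : ∑ t : Fin (n + 1),
      (if t = 0 then d - 1 else if t = 1 then 1 else 0) = d := by
    have hpt : ∀ t : Fin (n + 1),
        (if t = 0 then d - 1 else if t = 1 then 1 else 0)
          = (if t = 0 then d - 1 else 0) + (if t = 1 then 1 else 0) := by
      intro t
      by_cases h0 : t = 0
      · subst h0; simp [h01]
      · by_cases h1 : t = 1
        · subst h1; simp [h0, hn0]
        · simp [h0, h1]
    rw [Finset.sum_congr rfl fun t _ => hpt t, Finset.sum_add_distrib]
    simp
    omega
  set b : {k : Fin (n + 1) → ℕ // ∑ t, k t = d} :=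
    ⟨fun t => if t = 0 then d - 1 else if t = 1 then 1 else 0, hb_sum⟩ with hb_def
  have ha1 : a.1 1 = 0 := by simp [ha_def, h01.symm]
  have hb1 : b.1 1 = 1 := by simp [hb_def, h01.symm]
  have hab : a ≠ b := by
    intro h
    rw [h, hb1] at ha1
    exact one_ne_zero ha1
  set μ₀ : ({k : Fin (n + 1) → ℕ // ∑ t, k t = d} →₀ ℕ) :=
    Finsupp.single a (m - 1) + Finsupp.single b 1 with hμ₀_def
  -- every monomial of p equals μ₀
  have hsupp : ∀ μ ∈ p.support, μ = μ₀ := by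
    intro μ hμ
    have hwμ := fun t => congrFun (hw μ hμ) t
    have hcoeff : coeff μ p ≠ 0 := mem_support_iff.mp hμ
    have hdeg : ∑ k ∈ μ.support, μ k = m := by
      have := hp hcoeff
      rw [Finsupp.weight_apply] at this
      simpa [Finsupp.sum] using this
    -- weights at t ≥ 2 vanish
    have hzero : ∀ k ∈ μ.support, ∀ t : Fin (n + 1), t ≠ 0 → t ≠ 1 → k.1 t = 0 := by
      intro k hk t ht0 ht1
      have h := hwμ t
      simp only [ht0, ht1, if_false, Finsupp.sum] at h
      have h2 := (Finset.sum_eq_zero_iff.mp h) k hk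
      have hμk : μ k ≠ 0 := Finsupp.mem_support_iff.mp hk
      exact (Nat.mul_eq_zero.mp h2).resolve_left hμk
    have h1 : ∑ k ∈ μ.support, μ k * k.1 1 = 1 := by
      have h := hwμ 1
      simp only [h01.symm, if_false, if_true, Finsupp.sum] at h
      exact h
    -- classification of the support of μ
    have hclass : ∀ k ∈ μ.support, k = a ∨ k = b := by
      intro k hk
      have hk2 : ∀ t : Fin (n + 1), t ≠ 0 → t ≠ 1 → k.1 t = 0 := hzero k hk
      have hμk : μ k ≠ 0 := Finsupp.mem_support_iff.mp hk
      have hle : μ k * k.1 1 ≤ 1 := by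
        have := Finset.single_le_sum (f := fun k => μ k * k.1 1)
          (fun i _ => Nat.zero_le _) hk
        rw [h1] at this
        exact this
      have hk1le : k.1 1 ≤ 1 :=
        le_trans (Nat.le_mul_of_pos_left _ (Nat.pos_of_ne_zero hμk)) hle
      have hksum : k.1 0 + k.1 1 = d := by
        have hs := k.2
        have hpt : ∀ t : Fin (n + 1),
            k.1 t = (if t = 0 then k.1 0 else 0) + (if t = 1 then k.1 1 else 0) := by
          intro t
          by_cases h0 : t = 0
          · subst h0; simp [h01]
          · by_cases h1t : t = 1
            · subst h1t; simp [h01.symm]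
            · simp [h0, h1t, hk2 t h0 h1t]
        rw [Finset.sum_congr rfl fun t _ => hpt t, Finset.sum_add_distrib] at hs
        simpa using hs
      clear hle h1 hdeg hwμ
      rcases Nat.le_one_iff_eq_zero_or_eq_one.mp hk1le with h | h
      · left
        apply Subtype.ext
        funext t
        by_cases h0 : t = 0
        · subst h0; simp [ha_def]; omega
        · by_cases h1t : t = 1
          · subst h1t; simp [ha_def, h01.symm, h]
          · simp [ha_def, h0, hk2 t h0 h1t]
      · right
        apply Subtype.ext
        funext t
        by_cases h0 : t = 0
        · subst h0; simp [hb_def]; omega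
        · by_cases h1t : t = 1
          · subst h1t; simp [hb_def, h01.symm, h]
          · simp [hb_def, h0, h1t, hk2 t h0 h1t]
    -- b occurs with multiplicity 1
    have hμb : μ b = 1 := by
      have hpt : ∀ k ∈ μ.support, μ k * k.1 1 = if k = b then μ b else 0 := by
        intro k hk
        rcases hclass k hk with h | h
        · subst h
          rw [ha1, if_neg hab, Nat.mul_zero]
        · subst h
          rw [hb1, if_pos rfl, Nat.mul_one]
      rw [Finset.sum_congr rfl hpt,
        Finset.sum_ite_eq' μ.support b (fun _ => μ b)] at h1
      split at h1
      · exact h1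
      · exact absurd h1 (by decide)
    have hbsupp : b ∈ μ.support := Finsupp.mem_support_iff.mpr (by rw [hμb]; exact one_ne_zero)
    -- a occurs with multiplicity m - 1
    have hsub : μ.support ⊆ {a, b} := by
      intro k hk
      rcases hclass k hk with h | h <;> simp [h]
    have hμa : μ a = m - 1 := by
      have hsum2 : ∑ k ∈ ({a, b} : Finset _), μ k = m := by
        rw [← hdeg]
        exact (Finset.sum_subset hsub fun k _ hk =>
          Finsupp.notMem_support_iff.mp hk).symm
      rw [Finset.sum_pair hab] at hsum2
      clear hdeg h1
      omega
    -- conclude μ = μ₀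
    ext k
    by_cases hka : k = a
    · subst hka
      simp [hμ₀_def, hμa, Finsupp.single_eq_of_ne' hab.symm]
    · by_cases hkb : k = b
      · subst hkb
        simp [hμ₀_def, hμb, Finsupp.single_eq_of_ne' hab]
      · have hkns : k ∉ μ.support := fun hk => by
          rcases hclass k hk with h | h
          · exact hka h
          · exact hkb h
        rw [Finsupp.notMem_support_iff.mp hkns]
        simp [hμ₀_def, Finsupp.single_eq_of_ne' (Ne.symm hka),
          Finsupp.single_eq_of_ne' (Ne.symm hkb)]
  -- hence p is a single monomial
  set c : ℂ := coeff μ₀ p with hc_def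
  have hp_eq : p = monomial μ₀ c := by
    ext ν
    rw [coeff_monomial]
    by_cases hν : μ₀ = ν
    · rw [hν] at hc_def ⊢; simp [← hc_def]
    · simp only [hν, if_false]
      by_contra hne
      exact hν ((hsupp ν (mem_support_iff.mpr hne)).symm)
  -- compute the derivation
  have hEa : E₁₂ (X a) = 0 := hE₀ a ha1
  have hEb : E₁₂ (X b) = (1 : ℂ) • X a := by
    have key := hE₁ b a (le_of_eq hb1.symm) ?_
    · rw [hb1] at key; simpa using key
    · funext t
      by_cases h0 : t = 0
      · subst h0; simp [ha_def, hb_def, h01]; omega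
      · by_cases h1t : t = 1
        · subst h1t; simp [ha_def, hb_def, h01.symm]
        · simp [ha_def, hb_def, h0, h1t]
  have hEC : E₁₂ (C c) = 0 := by
    rw [← MvPolynomial.algebraMap_eq]
    exact Derivation.map_algebraMap E₁₂ c
  have hmono : monomial μ₀ c = X a ^ (m - 1) * (X b ^ 1 * C c) := by
    rw [show μ₀ = Finsupp.single a (m - 1) + (Finsupp.single b 1 + 0) by
          simp [hμ₀_def],
      monomial_single_add, monomial_single_add, monomial_zero']
  have hpow : X a ^ (m - 1) * X a
      = (X a ^ m : MvPolynomial {k : Fin (n + 1) → ℕ // ∑ t, k t = d} ℂ) := by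
    rw [← pow_succ]
    congr 1
    omega
  have hE_calc : E₁₂ p = c • (X a ^ m) := by
    rw [hp_eq, hmono, pow_one]
    rw [Derivation.leibniz, Derivation.leibniz, Derivation.leibniz_pow, hEa, hEb, hEC]
    simp only [smul_zero, zero_add, one_smul, smul_eq_mul, mul_zero, add_zero]
    rw [smul_eq_C_mul, ← hpow]
    ring
  rw [hEp] at hE_calc
  have hc0 : c = 0 := by
    have h2 : c • (X a ^ m : MvPolynomial {k : Fin (n + 1) → ℕ // ∑ t, k t = d} ℂ) = 0 :=
      hE_calc.symm
    rw [smul_eq_C_mul, C_mul_X_pow_eq_monomial] at h2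
    exact monomial_eq_zero.mp h2
  rw [hp_eq, hc0, map_zero]
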